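/- Let Q* be a dyadic cube and let the stopping cubes F_{Q*}^{j+1} inside a cube F ∈ F_{Q*}^j be the maximal dyadic subcubes Q of F for which |⟨b_F⟩_Q| < 1/2 or ⟨|b_F|^p⟩_Q > 2^{p'+1} A^{p'}, where ⟨b_F⟩_F = 1 and ‖b_F‖_{L^p(μ)}^p ≤ A μ(F). Then ∑_{S ∈ F_{Q*}^{j+1}, S ⊂ F} μ(S) ≤ c μ(F) for some constant c < 1 depending only on p and A. -/

import Mathlib

open MeasureTheory
open scoped ENNReal NNReal

noncomputable section

def dyadicCube (n : ℕ) (k : ℤ) (c : Fin n → ℤ) : Set (Fin n → ℝ) :=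
  {x | ∀ i, (c i : ℝ) * 2 ^ k ≤ x i ∧ x i < ((c i : ℝ) + 1) * 2 ^ k}

lemma measurableSet_dyadicCube (n : ℕ) (k : ℤ) (c : Fin n → ℤ) :
    MeasurableSet (dyadicCube n k c) := by
  have : dyadicCube n k c = ⋂ i, (fun x : Fin n → ℝ => x i) ⁻¹'
      (Set.Ico ((c i : ℝ) * 2 ^ k) (((c i : ℝ) + 1) * 2 ^ k)) := by
    ext x; simp [dyadicCube, Set.mem_iInter, Set.mem_Ico]
  rw [this]
  exact MeasurableSet.iInter fun i => (measurable_pi_apply i) measurableSet_Ico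

lemma two_zpow_pos (k : ℤ) : (0:ℝ) < 2 ^ k := zpow_pos (by norm_num) k

/-- key integer step: if `(a:ℝ)*2^k < (b:ℝ)*2^k` for integers, then `a+1 ≤ b`. -/
lemma int_step {k : ℤ} {a b : ℤ} (h : (a:ℝ) * 2 ^ k < (b:ℝ) * 2 ^ k) :
    ((a:ℝ) + 1) * 2 ^ k ≤ (b:ℝ) * 2 ^ k := by
  have hk := two_zpow_pos k
  have : (a:ℝ) < b := lt_of_mul_lt_mul_right h hk.le
  have hab : a < b := by exact_mod_cast this
  have : (a:ℝ) + 1 ≤ b := by exact_mod_cast hab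
  nlinarith

lemma dyadic_subset_of_le {n : ℕ} {k k' : ℤ} {c c' : Fin n → ℤ} (hk : k ≤ k')
    {x : Fin n → ℝ} (hx : x ∈ dyadicCube n k c) (hx' : x ∈ dyadicCube n k' c') :
    dyadicCube n k c ⊆ dyadicCube n k' c' := by
  intro y hy i
  obtain ⟨h1, h2⟩ := hx i
  obtain ⟨h1', h2'⟩ := hx' i
  obtain ⟨hy1, hy2⟩ := hy i
  set d : ℕ := (k' - k).toNat with hd
  have hk' : k' = k + (d:ℤ) := by omega
  have hcast : ∀ m : ℤ, (m:ℝ) * 2 ^ k' = ((m * 2 ^ d : ℤ) : ℝ) * 2 ^ k := by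
    intro m
    rw [hk', zpow_add₀ (by norm_num : (2:ℝ) ≠ 0), zpow_natCast]
    push_cast
    ring
  -- lower: c' i * 2^k' ≤ c i * 2^k
  have hlow : (c' i : ℝ) * 2 ^ k' ≤ (c i : ℝ) * 2 ^ k := by
    by_contra hcon
    push_neg at hcon
    have h' : ((c i : ℝ)) * 2 ^ k < ((c' i * 2 ^ d : ℤ) : ℝ) * 2 ^ k := by
      rw [← hcast]; exact hcon
    have := int_step h'
    rw [← hcast] at this
    exact absurd (lt_of_lt_of_le h2 this) (not_lt.mpr h1')
  -- upper: (c i + 1) * 2^k ≤ (c' i + 1) * 2^k'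
  have hup : ((c i : ℝ) + 1) * 2 ^ k ≤ ((c' i : ℝ) + 1) * 2 ^ k' := by
    have h' : ((c' i * 2 ^ d : ℤ) : ℝ) * 2 ^ k < ((c i : ℝ) + 1) * 2 ^ k := by
      rw [← hcast]
      exact lt_of_le_of_lt h1' h2
    -- so c' i * 2^d ≤ c i, hence (c i +1) ≤ (c' i +1) * 2^d  ... need other direction:
    -- we need  c i * 2^k < (c' i + 1) * 2^k'
    have hx2 : ((c i : ℝ)) * 2 ^ k < ((c' i + 1 : ℤ) : ℝ) * 2 ^ k' := by
      push_cast
      linarith [lt_of_le_of_lt h1 h2']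
    rw [hcast (c' i + 1)] at hx2
    have h3 := int_step hx2
    calc ((c i : ℝ) + 1) * 2 ^ k ≤ (((c' i + 1) * 2 ^ d : ℤ) : ℝ) * 2 ^ k := h3
      _ = ((c' i + 1 : ℤ) : ℝ) * 2 ^ k' := (hcast (c' i + 1)).symm
      _ = ((c' i : ℝ) + 1) * 2 ^ k' := by push_cast; ring
  exact ⟨le_trans hlow hy1, lt_of_lt_of_le hy2 hup⟩

lemma dyadic_nested {n : ℕ} {k k' : ℤ} {c c' : Fin n → ℤ}
    (h : ¬ Disjoint (dyadicCube n k c) (dyadicCube n k' c')) :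
    dyadicCube n k c ⊆ dyadicCube n k' c' ∨ dyadicCube n k' c' ⊆ dyadicCube n k c := by
  obtain ⟨x, hx, hx'⟩ := Set.not_disjoint_iff.mp h
  rcases le_total k k' with hk | hk
  · exact Or.inl (dyadic_subset_of_le hk hx hx')
  · exact Or.inr (dyadic_subset_of_le hk hx' hx)

lemma corner_mem {n : ℕ} (k : ℤ) (c : Fin n → ℤ) :
    (fun i => (c i : ℝ) * 2 ^ k) ∈ dyadicCube n k c := by
  intro i
  refine ⟨le_refl _, ?_⟩
  have := two_zpow_pos k
  dsimp only
  nlinarith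

lemma dyadic_injective {n : ℕ} (hn : 0 < n) {k k' : ℤ} {c c' : Fin n → ℤ}
    (h : dyadicCube n k c = dyadicCube n k' c') : k = k' ∧ c = c' := by
  -- first: k' ≤ k
  have key : ∀ (k₁ k₂ : ℤ) (c₁ c₂ : Fin n → ℤ),
      dyadicCube n k₁ c₁ = dyadicCube n k₂ c₂ → k₂ ≤ k₁ := by
    intro k₁ k₂ c₁ c₂ he
    by_contra hcon
    push_neg at hcon
    set i : Fin n := ⟨0, hn⟩
    -- point y in cube 2 with i-th coordinate shifted by 2^(k₂-1)
    set y : Fin n → ℝ := fun j => if j = i then (c₂ i : ℝ) * 2 ^ k₂ + 2 ^ (k₂ - 1)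
      else (c₂ j : ℝ) * 2 ^ k₂ with hy
    have hyin : y ∈ dyadicCube n k₂ c₂ := by
      intro j
      by_cases hj : j = i
      · subst hj
        simp only [hy, if_pos rfl]
        constructor
        · nlinarith [two_zpow_pos (k₂ - 1)]
        · have : (2:ℝ) ^ (k₂ - 1) < 2 ^ k₂ :=
            zpow_lt_zpow_right₀ (by norm_num) (by omega)
          nlinarith
      · simp only [hy, if_neg hj]
        exact corner_mem k₂ c₂ j
    have hyin1 : y ∈ dyadicCube n k₁ c₁ := by rw [he]; exact hyin
    have hcorner2 : (fun j => (c₂ j : ℝ) * 2 ^ k₂) ∈ dyadicCube n k₁ c₁ := by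
      rw [he]; exact corner_mem k₂ c₂
    -- at coordinate i
    have hup : y i < ((c₁ i : ℝ) + 1) * 2 ^ k₁ := (hyin1 i).2
    have hlo : (c₁ i : ℝ) * 2 ^ k₁ ≤ (c₂ i : ℝ) * 2 ^ k₂ := (hcorner2 i).1
    have hyi : y i = (c₂ i : ℝ) * 2 ^ k₂ + 2 ^ (k₂ - 1) := by simp [hy]
    have h2 : (2:ℝ) ^ (k₂ - 1) < 2 ^ k₁ := by nlinarith [two_zpow_pos k₁, two_zpow_pos (k₂ - 1)]
    have : k₂ - 1 < k₁ := by
      by_contra hc2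
      push_neg at hc2
      exact absurd h2 (not_lt.mpr (zpow_le_zpow_right₀ (by norm_num) hc2))
    omega
  have hk12 : k = k' := le_antisymm (key k' k c' c h.symm) (key k k' c c' h)
  subst hk12
  refine ⟨rfl, funext fun i => ?_⟩
  have h1 : (fun j => (c j : ℝ) * 2 ^ k) ∈ dyadicCube n k c' := by
    rw [← h]; exact corner_mem k c
  have h2 : (fun j => (c' j : ℝ) * 2 ^ k) ∈ dyadicCube n k c := by
    rw [h]; exact corner_mem k c'
  have ha := (h1 i).1
  have hb := (h2 i).1
  have hpos := two_zpow_pos k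
  dsimp only at ha hb
  have h1' : (c' i : ℝ) ≤ c i := le_of_mul_le_mul_right ha hpos
  have h2' : (c i : ℝ) ≤ c' i := le_of_mul_le_mul_right hb hpos
  have : (c i : ℝ) = c' i := le_antisymm h2' h1'
  exact_mod_cast this


lemma holder_one {α : Type*} [MeasurableSpace α] (ν : Measure α) [IsFiniteMeasure ν]
    {p q : ℝ} (hpq : p.HolderConjugate q) {f : α → ℝ} (hf : Integrable f ν)
    (hfp : Integrable (fun x => |f x| ^ p) ν) :
    ∫ x, |f x| ∂ν ≤ (∫ x, |f x| ^ p ∂ν) ^ (1/p) * (ν Set.univ).toReal ^ (1/q) := by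
  set g : α → ℝ≥0∞ := fun x => ENNReal.ofReal |f x| with hg
  have hgm : AEMeasurable g ν :=
    ENNReal.measurable_ofReal.comp_aemeasurable hf.1.norm.aemeasurable
  have H := ENNReal.lintegral_mul_le_Lp_mul_Lq ν hpq hgm (aemeasurable_const (b := (1:ℝ≥0∞)))
  simp only [Pi.mul_apply, mul_one, ENNReal.one_rpow, lintegral_one, lintegral_const] at H
  have h1 : ENNReal.ofReal (∫ x, |f x| ∂ν) = ∫⁻ x, g x ∂ν :=
    ofReal_integral_eq_lintegral_ofReal hf.abs (Filter.Eventually.of_forall fun x => abs_nonneg _)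
  have h2 : (∫⁻ x, g x ^ p ∂ν) = ENNReal.ofReal (∫ x, |f x| ^ p ∂ν) := by
    rw [ofReal_integral_eq_lintegral_ofReal hfp
      (Filter.Eventually.of_forall fun x => Real.rpow_nonneg (abs_nonneg _) _)]
    refine lintegral_congr fun x => ?_
    rw [hg, ENNReal.ofReal_rpow_of_nonneg (abs_nonneg _) hpq.nonneg]
  rw [← h1, h2] at H
  have hfin : (ENNReal.ofReal (∫ x, |f x| ^ p ∂ν)) ^ (1/p) * (ν Set.univ) ^ (1/q) ≠ ⊤ := by
    apply ENNReal.mul_ne_top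
    · exact ENNReal.rpow_ne_top_of_nonneg (one_div_nonneg.mpr hpq.nonneg) ENNReal.ofReal_ne_top
    · exact ENNReal.rpow_ne_top_of_nonneg (one_div_nonneg.mpr hpq.symm.nonneg) (measure_ne_top ν _)
  have := ENNReal.toReal_le_toReal (by exact ENNReal.ofReal_ne_top) hfin |>.mpr H
  rw [ENNReal.toReal_ofReal (integral_nonneg fun x => abs_nonneg _)] at this
  refine this.trans (le_of_eq ?_)
  rw [ENNReal.toReal_mul, ← ENNReal.toReal_rpow, ← ENNReal.toReal_rpow,
    ENNReal.toReal_ofReal (integral_nonneg fun x => Real.rpow_nonneg (abs_nonneg _) _)]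

lemma dyadicCube_zero (k : ℤ) (c : Fin 0 → ℤ) : dyadicCube 0 k c = Set.univ :=
  Set.eq_univ_of_forall fun _ i => i.elim0

set_option maxHeartbeats 2000000 in
theorem stopping_cubes_first_generation_packing (p A : ℝ)
    (hp : 1 < p) (hp2 : p ≤ 2) (hA : 0 < A) :
    ∃ c : ℝ, 0 ≤ c ∧ c < 1 ∧
    ∀ (n : ℕ) (μ : Measure (Fin n → ℝ)) (kF : ℤ) (cF : Fin n → ℤ)
      (b : (Fin n → ℝ) → ℝ) (S : Set (ℤ × (Fin n → ℤ))),
      μ (dyadicCube n kF cF) ≠ 0 → μ (dyadicCube n kF cF) ≠ ⊤ →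
      IntegrableOn b (dyadicCube n kF cF) μ →
      IntegrableOn (fun x => |b x| ^ p) (dyadicCube n kF cF) μ →
      (∀ x ∉ dyadicCube n kF cF, b x = 0) →
      ((μ (dyadicCube n kF cF)).toReal⁻¹ * ∫ x in dyadicCube n kF cF, b x ∂μ) = 1 →
      (∫ x in dyadicCube n kF cF, |b x| ^ p ∂μ) ≤ A * (μ (dyadicCube n kF cF)).toReal →
      (∀ q ∈ S, dyadicCube n q.1 q.2 ⊆ dyadicCube n kF cF ∧
        (|(μ (dyadicCube n q.1 q.2)).toReal⁻¹ * ∫ x in dyadicCube n q.1 q.2, b x ∂μ|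
            < 1 / 2 ∨
          (μ (dyadicCube n q.1 q.2)).toReal⁻¹ * ∫ x in dyadicCube n q.1 q.2, |b x| ^ p ∂μ
            > 2 ^ (p / (p - 1) + 1) * A ^ (p / (p - 1)))) →
      (∀ q ∈ S, ∀ (k' : ℤ) (c' : Fin n → ℤ),
        dyadicCube n q.1 q.2 ⊂ dyadicCube n k' c' →
        dyadicCube n k' c' ⊆ dyadicCube n kF cF →
        ¬ (|(μ (dyadicCube n k' c')).toReal⁻¹ * ∫ x in dyadicCube n k' c', b x ∂μ|
            < 1 / 2 ∨
          (μ (dyadicCube n k' c')).toReal⁻¹ * ∫ x in dyadicCube n k' c', |b x| ^ p ∂μ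
            > 2 ^ (p / (p - 1) + 1) * A ^ (p / (p - 1)))) →
      ∑' q : S, μ (dyadicCube n q.1.1 q.1.2) ≤
        ENNReal.ofReal c * μ (dyadicCube n kF cF) := by
  have hp0 : 0 < p := lt_trans one_pos hp
  have hp10 : 0 < p - 1 := by linarith
  set p' : ℝ := p / (p - 1) with hp'def
  have hconj : p.HolderConjugate p' := Real.HolderConjugate.conjExponent hp
  have hp'1 : 1 < p' := hconj.symm.lt
  have hp'0 : 0 < p' := lt_trans one_pos hp'1
  have hinv : 1/p + 1/p' = 1 := by
    have := hconj.inv_add_inv_eq_one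
    simpa [one_div] using this
  -- the constant
  set A₁ : ℝ := max A 1 with hA₁def
  have hA₁ : 1 ≤ A₁ := le_max_right _ _
  set δ₂ : ℝ := 2 ^ (-(p' + 1)) * A₁ ^ (1 - p') with hδ₂def
  have hδ₂pos : 0 < δ₂ := mul_pos (Real.rpow_pos_of_pos two_pos _)
    (Real.rpow_pos_of_pos (lt_of_lt_of_le one_pos hA₁) _)
  have hδ₂le : δ₂ ≤ 1 := by
    have h1 : (2:ℝ) ^ (-(p' + 1)) ≤ 1 :=
      Real.rpow_le_one_of_one_le_of_nonpos one_le_two (by linarith)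
    have h2 : A₁ ^ (1 - p') ≤ 1 :=
      Real.rpow_le_one_of_one_le_of_nonpos hA₁ (by linarith)
    calc δ₂ ≤ 1 * 1 := mul_le_mul h1 h2 (Real.rpow_nonneg (by linarith) _) one_pos.le
      _ = 1 := one_mul 1
  refine ⟨1 - δ₂, by linarith, by linarith, ?_⟩
  intro n μ kF cF b S hF0 hFtop hIb hIbp hsupp havg hAp hstop hmax
  set F : Set (Fin n → ℝ) := dyadicCube n kF cF with hFdef
  have hFm : MeasurableSet F := measurableSet_dyadicCube n kF cF
  set M : ℝ := (μ F).toReal with hMdef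
  have hM : 0 < M := ENNReal.toReal_pos hF0 hFtop
  have hIF : ∫ x in F, b x ∂μ = M := by
    have h := havg
    rw [inv_mul_eq_div, div_eq_one_iff_eq (ne_of_gt hM)] at h
    exact h
  -- A ≥ 1
  haveI hFfin : IsFiniteMeasure (μ.restrict F) :=
    ⟨by rw [Measure.restrict_apply_univ]; exact hFtop.lt_top⟩
  have hA1 : 1 ≤ A := by
    have hH := holder_one (μ.restrict F) hconj hIb hIbp
    rw [Measure.restrict_apply_univ] at hH
    have h1 : (∫ x in F, |b x| ^ p ∂μ) ^ (1/p) ≤ (A * M) ^ (1/p) :=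
      Real.rpow_le_rpow (integral_nonneg fun x => Real.rpow_nonneg (abs_nonneg _) _)
        hAp (by positivity)
    have h2 : M ≤ A ^ (1/p) * M := by
      calc M = ∫ x in F, b x ∂μ := hIF.symm
        _ ≤ ∫ x in F, |b x| ∂μ :=
            integral_mono hIb hIb.abs fun x => le_abs_self _
        _ ≤ (∫ x in F, |b x| ^ p ∂μ) ^ (1/p) * M ^ (1/p') := hH
        _ ≤ (A * M) ^ (1/p) * M ^ (1/p') :=
            mul_le_mul_of_nonneg_right h1 (Real.rpow_nonneg hM.le _)
        _ = A ^ (1/p) * (M ^ (1/p) * M ^ (1/p')) := by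
            rw [Real.mul_rpow hA.le hM.le]; ring
        _ = A ^ (1/p) * M := by
            rw [← Real.rpow_add hM, hinv, Real.rpow_one]
    have h3 : 1 ≤ A ^ (1/p) := by
      by_contra hcon
      push_neg at hcon
      nlinarith
    by_contra hcon
    push_neg at hcon
    exact absurd h3 (not_le.mpr (Real.rpow_lt_one hA.le hcon (by positivity)))
  have hmaxA : A₁ = A := max_eq_left hA1
  -- F itself does not satisfy the stopping condition
  have hFnotstop : ¬ (|(μ F).toReal⁻¹ * ∫ x in F, b x ∂μ| < 1 / 2 ∨
      (μ F).toReal⁻¹ * ∫ x in F, |b x| ^ p ∂μ > 2 ^ (p' + 1) * A ^ p') := by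
    rintro (h | h)
    · rw [havg] at h; norm_num at h
    · have h1 : (μ F).toReal⁻¹ * ∫ x in F, |b x| ^ p ∂μ ≤ A := by
        rw [← hMdef, inv_mul_le_iff₀ hM, mul_comm]
        exact hAp
      have h2 : A ≤ A ^ p' := by
        nth_rewrite 1 [← Real.rpow_one A]
        exact Real.rpow_le_rpow_of_exponent_le hA1 hp'1.le
      have h3 : (1:ℝ) < 2 ^ (p' + 1) :=
        Real.one_lt_rpow_iff_of_pos two_pos |>.mpr (Or.inl ⟨one_lt_two, by linarith⟩)
      have h4 : (0:ℝ) < A ^ p' := Real.rpow_pos_of_pos hA _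
      nlinarith
  -- the case n = 0
  rcases Nat.eq_zero_or_pos n with hn | hn
  · subst hn
    haveI : IsEmpty ↥S := by
      refine ⟨fun q => ?_⟩
      have h1 : dyadicCube 0 q.1.1 q.1.2 = F := by
        rw [hFdef, dyadicCube_zero, dyadicCube_zero]
      have := (hstop q.1 q.2).2
      rw [h1] at this
      exact hFnotstop this
    rw [tsum_empty]
    exact zero_le
  -- main case n ≥ 1
  classical
  set Qf : ℤ × (Fin n → ℤ) → Set (Fin n → ℝ) := fun q => dyadicCube n q.1 q.2 with hQf
  have hQm : ∀ q, MeasurableSet (Qf q) := fun q => measurableSet_dyadicCube n q.1 q.2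
  have hdisj : ∀ q ∈ S, ∀ q' ∈ S, q ≠ q' → Disjoint (Qf q) (Qf q') := by
    intro q hq q' hq' hne
    by_contra hcon
    rcases dyadic_nested hcon with hsub | hsub
    · rcases hsub.ssubset_or_eq with hss | heq
      · exact hmax q hq q'.1 q'.2 hss (hstop q' hq').1 (hstop q' hq').2
      · obtain ⟨hk, hc⟩ := dyadic_injective hn heq
        exact hne (Prod.ext hk hc)
    · rcases hsub.ssubset_or_eq with hss | heq
      · exact hmax q' hq' q.1 q.2 hss (hstop q hq).1 (hstop q hq).2
      · obtain ⟨hk, hc⟩ := dyadic_injective hn heq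
        exact hne (Prod.ext hk.symm hc.symm)
  set T₁ : Set (ℤ × (Fin n → ℤ)) :=
    {q ∈ S | |(μ (Qf q)).toReal⁻¹ * ∫ x in Qf q, b x ∂μ| < 1/2} with hT₁def
  set T₂ : Set (ℤ × (Fin n → ℤ)) := S \ T₁ with hT₂def
  have hT₁S : T₁ ⊆ S := fun q hq => hq.1
  have hT₂S : T₂ ⊆ S := fun q hq => hq.1
  set U₁ : Set (Fin n → ℝ) := ⋃ (q : T₁), Qf q.1 with hU₁def
  set U₂ : Set (Fin n → ℝ) := ⋃ (q : T₂), Qf q.1 with hU₂def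
  -- generic facts
  have hpd : ∀ (T : Set (ℤ × (Fin n → ℤ))), T ⊆ S →
      Pairwise (Function.onFun Disjoint fun q : T => Qf q.1) := by
    intro T hT q q' hne
    exact hdisj q.1 (hT q.2) q'.1 (hT q'.2) (fun h => hne (Subtype.ext h))
  have hU₁F : U₁ ⊆ F := Set.iUnion_subset fun q => (hstop q.1 (hT₁S q.2)).1
  have hU₂F : U₂ ⊆ F := Set.iUnion_subset fun q => (hstop q.1 (hT₂S q.2)).1
  have hU₁m : MeasurableSet U₁ := MeasurableSet.iUnion fun q => hQm q.1
  have hU₂m : MeasurableSet U₂ := MeasurableSet.iUnion fun q => hQm q.1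
  have hμU₁ : μ U₁ = ∑' (q : T₁), μ (Qf q.1) :=
    measure_iUnion (hpd T₁ hT₁S) fun q => hQm q.1
  have hμU₂ : μ U₂ = ∑' (q : T₂), μ (Qf q.1) :=
    measure_iUnion (hpd T₂ hT₂S) fun q => hQm q.1
  have hU₁ne : μ U₁ ≠ ⊤ := ((measure_mono hU₁F).trans_lt hFtop.lt_top).ne
  have hU₂ne : μ U₂ ≠ ⊤ := ((measure_mono hU₂F).trans_lt hFtop.lt_top).ne
  have hQne : ∀ q : ℤ × (Fin n → ℤ), q ∈ S → μ (Qf q) ≠ ⊤ := fun q hq =>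
    ((measure_mono (hstop q hq).1).trans_lt hFtop.lt_top).ne
  set m₁ : ℝ := (μ U₁).toReal with hm₁def
  set m₂ : ℝ := (μ U₂).toReal with hm₂def
  have hm₁0 : 0 ≤ m₁ := ENNReal.toReal_nonneg
  have hm₂0 : 0 ≤ m₂ := ENNReal.toReal_nonneg
  have hm₁M : m₁ ≤ M := ENNReal.toReal_mono hFtop (measure_mono hU₁F)
  have hm₂M : m₂ ≤ M := ENNReal.toReal_mono hFtop (measure_mono hU₂F)
  have htsum₁ : m₁ = ∑' (q : T₁), (μ (Qf q.1)).toReal := by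
    rw [hm₁def, hμU₁]
    exact ENNReal.tsum_toReal_eq fun q => hQne q.1 (hT₁S q.2)
  have htsum₂ : m₂ = ∑' (q : T₂), (μ (Qf q.1)).toReal := by
    rw [hm₂def, hμU₂]
    exact ENNReal.tsum_toReal_eq fun q => hQne q.1 (hT₂S q.2)
  have hsummable₁ : Summable fun q : T₁ => (μ (Qf q.1)).toReal :=
    ENNReal.summable_toReal (by rw [← hμU₁]; exact hU₁ne)
  have hsummable₂ : Summable fun q : T₂ => (μ (Qf q.1)).toReal :=
    ENNReal.summable_toReal (by rw [← hμU₂]; exact hU₂ne)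
  ---- estimate on U₁
  have key1 : ∀ q : T₁, ∫ x in Qf q.1, b x ∂μ ≤ 1/2 * (μ (Qf q.1)).toReal := by
    rintro ⟨q, hq⟩
    have hc := hq.2
    rcases eq_or_ne (μ (Qf q)) 0 with h0 | h0
    · have hz : μ.restrict (Qf q) = 0 := Measure.restrict_eq_zero.mpr h0
      rw [hz, integral_zero_measure, h0]
      norm_num
    · have ht : 0 < (μ (Qf q)).toReal := ENNReal.toReal_pos h0 (hQne q hq.1)
      have := (abs_le.mp hc.le).2
      rw [abs_mul, abs_of_nonneg (inv_nonneg.mpr ht.le)] at hc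
      have h2 : |∫ x in Qf q, b x ∂μ| < 1/2 * (μ (Qf q)).toReal := by
        rw [inv_mul_lt_iff₀ ht] at hc
        linarith [hc]
      exact le_trans (le_abs_self _) h2.le
  have hsum1 : HasSum (fun q : T₁ => ∫ x in Qf q.1, b x ∂μ) (∫ x in U₁, b x ∂μ) :=
    hasSum_integral_iUnion (fun q => hQm q.1) (hpd T₁ hT₁S) (hIb.mono_set hU₁F)
  have hI1 : ∫ x in U₁, b x ∂μ ≤ 1/2 * m₁ := by
    rw [← hsum1.tsum_eq, htsum₁, ← tsum_mul_left]
    exact Summable.tsum_le_tsum key1 hsum1.summable (hsummable₁.mul_left _)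
  -- the complement E
  set E : Set (Fin n → ℝ) := F \ U₁ with hEdef
  have hEsub : E ⊆ F := Set.diff_subset
  have hEm : MeasurableSet E := hFm.diff hU₁m
  have hμE : (μ E).toReal = M - m₁ := by
    rw [hEdef, measure_diff hU₁F hU₁m.nullMeasurableSet hU₁ne,
      ENNReal.toReal_sub_of_le (measure_mono hU₁F) hFtop]
  have hsplit : ∫ x in F, b x ∂μ = (∫ x in U₁, b x ∂μ) + ∫ x in E, b x ∂μ := by
    have hun : U₁ ∪ E = F := Set.union_diff_cancel hU₁F
    have hdisjE : Disjoint U₁ E := by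
      rw [hEdef]; exact disjoint_sdiff_self_right
    rw [← hun, setIntegral_union hdisjE hEm
      (hIb.mono_set hU₁F) (hIb.mono_set hEsub)]
  haveI hEfin : IsFiniteMeasure (μ.restrict E) :=
    ⟨by rw [Measure.restrict_apply_univ];
        exact (measure_mono hEsub).trans_lt hFtop.lt_top⟩
  have hHE := holder_one (μ.restrict E) hconj (hIb.mono_set hEsub) (hIbp.mono_set hEsub)
  rw [Measure.restrict_apply_univ] at hHE
  have hEp : ∫ x in E, |b x| ^ p ∂μ ≤ A * M := by
    refine le_trans (setIntegral_mono_set hIbp ?_ (HasSubset.Subset.eventuallyLE hEsub)) hAp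
    exact Filter.Eventually.of_forall fun x => Real.rpow_nonneg (abs_nonneg _) _
  have hchain : M / 2 ≤ (A * M) ^ (1/p) * (M - m₁) ^ (1/p') := by
    have h1 : (∫ x in E, |b x| ^ p ∂μ) ^ (1/p) ≤ (A * M) ^ (1/p) :=
      Real.rpow_le_rpow (integral_nonneg fun x => Real.rpow_nonneg (abs_nonneg _) _)
        hEp (by positivity)
    have h2 : M - 1/2 * m₁ ≤ ∫ x in E, b x ∂μ := by
      have := hsplit
      rw [hIF] at this
      linarith [hI1, this]
    have h3 : ∫ x in E, b x ∂μ ≤ ∫ x in E, |b x| ∂μ :=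
      integral_mono (hIb.mono_set hEsub) (hIb.mono_set hEsub).abs fun x => le_abs_self _
    have h4 : (∫ x in E, |b x| ^ p ∂μ) ^ (1/p) * ((μ E).toReal) ^ (1/p')
        ≤ (A * M) ^ (1/p) * (M - m₁) ^ (1/p') := by
      rw [hμE]
      exact mul_le_mul_of_nonneg_right h1 (Real.rpow_nonneg (by linarith) _)
    linarith [le_trans h2 (le_trans h3 (hHE.trans h4))]
  -- algebra: m₁ ≤ (1 - 2δ₂) M where 2δ₂ = 2^(-p') A^(1-p')
  set δA : ℝ := 2 ^ (-p') * A ^ (1 - p') with hδAdef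
  have hδApos : 0 < δA := mul_pos (Real.rpow_pos_of_pos two_pos _) (Real.rpow_pos_of_pos hA _)
  have hm₁bound : m₁ ≤ (1 - δA) * M := by
    have hβ0 : 0 ≤ M - m₁ := by linarith
    set C : ℝ := A ^ (p' - 1) * M ^ (p' - 1) with hCdef
    have hCpos : 0 < C := mul_pos (Real.rpow_pos_of_pos hA _) (Real.rpow_pos_of_pos hM _)
    have heq : C * (δA * M) = (M/2) ^ p' := by
      rw [hδAdef, hCdef, Real.div_rpow hM.le two_pos.le]
      have e1 : A ^ (p' - 1) * A ^ (1 - p') = 1 := by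
        rw [← Real.rpow_add hA]; norm_num
      have e2 : M ^ (p' - 1) * M = M ^ p' := by
        nth_rewrite 2 [← Real.rpow_one M]
        rw [← Real.rpow_add hM]; ring_nf
      have e3 : (2:ℝ) ^ (-p') = ((2:ℝ) ^ p')⁻¹ := Real.rpow_neg two_pos.le p'
      calc A ^ (p' - 1) * M ^ (p' - 1) * (2 ^ (-p') * A ^ (1 - p') * M)
          = (A ^ (p' - 1) * A ^ (1 - p')) * (M ^ (p' - 1) * M) * 2 ^ (-p') := by ring
        _ = M ^ p' * ((2:ℝ) ^ p')⁻¹ := by rw [e1, e2, e3]; ring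
        _ = M ^ p' / 2 ^ p' := by rw [div_eq_mul_inv]
    have hle : (M/2) ^ p' ≤ C * (M - m₁) := by
      have h1 : ((M/2) : ℝ) ^ p' ≤ ((A * M) ^ (1/p) * (M - m₁) ^ (1/p')) ^ p' :=
        Real.rpow_le_rpow (by positivity) hchain hp'0.le
      have h2 : ((A * M) ^ (1/p) * (M - m₁) ^ (1/p')) ^ p'
          = (A * M) ^ ((1/p) * p') * ((M - m₁) ^ (1/p')) ^ p' := by
        rw [Real.mul_rpow (Real.rpow_nonneg (by positivity) _) (Real.rpow_nonneg hβ0 _),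
          ← Real.rpow_mul (by positivity)]
      have h3 : ((M - m₁) ^ (1/p')) ^ p' = M - m₁ := by
        rw [← Real.rpow_mul hβ0, one_div, inv_mul_cancel₀ (ne_of_gt hp'0), Real.rpow_one]
      have h4 : (1/p) * p' = p' - 1 := by
        rw [hp'def]
        field_simp
        ring
      have h5 : (A * M) ^ (p' - 1) = C := by
        rw [hCdef, Real.mul_rpow hA.le hM.le]
      rw [h2, h3, h4, h5] at h1
      exact h1
    have : δA * M ≤ M - m₁ := by
      have := heq ▸ hle
      exact le_of_mul_le_mul_left this hCpos
    linarith
  ---- estimate on U₂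
  set lam : ℝ := 2 ^ (p' + 1) * A ^ p' with hlamdef
  have hlampos : 0 < lam := mul_pos (Real.rpow_pos_of_pos two_pos _) (Real.rpow_pos_of_pos hA _)
  have key2 : ∀ q : T₂, lam * (μ (Qf q.1)).toReal ≤ ∫ x in Qf q.1, |b x| ^ p ∂μ := by
    rintro ⟨q, hq⟩
    have hor := (hstop q hq.1).2
    have hnot1 : ¬ |(μ (Qf q)).toReal⁻¹ * ∫ x in Qf q, b x ∂μ| < 1/2 := fun h => hq.2 ⟨hq.1, h⟩
    have hc : (μ (Qf q)).toReal⁻¹ * ∫ x in Qf q, |b x| ^ p ∂μ > lam := hor.resolve_left hnot1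
    rcases eq_or_ne ((μ (Qf q)).toReal) 0 with h0 | h0
    · rw [h0, inv_zero, zero_mul] at hc
      exact absurd hc (not_lt.mpr hlampos.le)
    · have ht : 0 < (μ (Qf q)).toReal := lt_of_le_of_ne ENNReal.toReal_nonneg (Ne.symm h0)
      rw [gt_iff_lt, inv_mul_eq_div, lt_div_iff₀ ht] at hc
      linarith
  have hsum2 : HasSum (fun q : T₂ => ∫ x in Qf q.1, |b x| ^ p ∂μ)
      (∫ x in U₂, |b x| ^ p ∂μ) :=
    hasSum_integral_iUnion (fun q => hQm q.1) (hpd T₂ hT₂S) (hIbp.mono_set hU₂F)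
  have hU₂p : ∫ x in U₂, |b x| ^ p ∂μ ≤ A * M := by
    refine le_trans (setIntegral_mono_set hIbp ?_ (HasSubset.Subset.eventuallyLE hU₂F)) hAp
    exact Filter.Eventually.of_forall fun x => Real.rpow_nonneg (abs_nonneg _) _
  have hI2 : lam * m₂ ≤ A * M := by
    rw [htsum₂, ← tsum_mul_left]
    calc ∑' q : T₂, lam * (μ (Qf q.1)).toReal
        ≤ ∑' q : T₂, ∫ x in Qf q.1, |b x| ^ p ∂μ :=
          Summable.tsum_le_tsum key2 (hsummable₂.mul_left lam) hsum2.summable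
      _ = ∫ x in U₂, |b x| ^ p ∂μ := hsum2.tsum_eq
      _ ≤ A * M := hU₂p
  have hrel2 : lam * δA = 2 * A := by
    have e1 : (2:ℝ) ^ (p' + 1) * 2 ^ (-p') = 2 := by
      rw [← Real.rpow_add two_pos]
      norm_num
    have e2 : A ^ p' * A ^ (1 - p') = A := by
      rw [← Real.rpow_add hA]
      norm_num
    calc lam * δA = ((2:ℝ) ^ (p' + 1) * 2 ^ (-p')) * (A ^ p' * A ^ (1 - p')) := by
          rw [hlamdef, hδAdef]; ring
      _ = 2 * A := by rw [e1, e2]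
  have hm₂bound : m₂ ≤ (δA / 2) * M := by
    have hAeq : A = lam * δA / 2 := by linarith
    have h2 : lam * m₂ ≤ lam * ((δA / 2) * M) := by
      calc lam * m₂ ≤ A * M := hI2
        _ = lam * ((δA / 2) * M) := by rw [hAeq]; ring
    exact le_of_mul_le_mul_left h2 hlampos
  -- conclusion
  have hδA1 : δA ≤ 1 := by
    have h1 : (2:ℝ) ^ (-p') ≤ 1 :=
      Real.rpow_le_one_of_one_le_of_nonpos one_le_two (by linarith)
    have h2 : A ^ (1 - p') ≤ 1 :=
      Real.rpow_le_one_of_one_le_of_nonpos hA1 (by linarith)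
    calc δA ≤ 1 * 1 := mul_le_mul h1 h2 (Real.rpow_nonneg hA.le _) one_pos.le
      _ = 1 := one_mul 1
  have hδrel : δ₂ = δA / 2 := by
    have e1 : (2:ℝ) ^ (-(p' + 1)) = 2 ^ (-p') * 2 ^ (-1 : ℝ) := by
      rw [← Real.rpow_add two_pos]
      ring_nf
    have e2 : (2:ℝ) ^ (-1 : ℝ) = 1 / 2 := by
      rw [Real.rpow_neg_one]
      norm_num
    rw [hδ₂def, hδAdef, hmaxA, e1, e2]
    ring
  have hcover : (⋃ q : S, Qf q.1) ⊆ U₁ ∪ U₂ := by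
    intro x hx
    rcases Set.mem_iUnion.mp hx with ⟨q, hqx⟩
    by_cases h1 : |(μ (Qf q.1)).toReal⁻¹ * ∫ x in Qf q.1, b x ∂μ| < 1/2
    · exact Or.inl (Set.mem_iUnion.mpr ⟨⟨q.1, ⟨q.2, h1⟩⟩, hqx⟩)
    · exact Or.inr (Set.mem_iUnion.mpr ⟨⟨q.1, ⟨q.2, fun hmem => h1 hmem.2⟩⟩, hqx⟩)
  have hSsum : ∑' q : S, μ (Qf q.1) = μ (⋃ q : S, Qf q.1) :=
    (measure_iUnion (hpd S fun _ h => h) fun q => hQm q.1).symm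
  show ∑' q : S, μ (Qf q.1) ≤ ENNReal.ofReal (1 - δ₂) * μ F
  calc ∑' q : S, μ (Qf q.1) = μ (⋃ q : S, Qf q.1) := hSsum
    _ ≤ μ (U₁ ∪ U₂) := measure_mono hcover
    _ ≤ μ U₁ + μ U₂ := measure_union_le _ _
    _ = ENNReal.ofReal m₁ + ENNReal.ofReal m₂ := by
        rw [hm₁def, hm₂def, ENNReal.ofReal_toReal hU₁ne, ENNReal.ofReal_toReal hU₂ne]
    _ ≤ ENNReal.ofReal ((1 - δA) * M) + ENNReal.ofReal ((δA / 2) * M) :=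
        add_le_add (ENNReal.ofReal_le_ofReal hm₁bound) (ENNReal.ofReal_le_ofReal hm₂bound)
    _ = ENNReal.ofReal ((1 - δA) * M + (δA / 2) * M) :=
        (ENNReal.ofReal_add (by nlinarith) (by nlinarith)).symm
    _ = ENNReal.ofReal ((1 - δ₂) * M) := by rw [hδrel]; ring_nf
    _ = ENNReal.ofReal (1 - δ₂) * ENNReal.ofReal M :=
        ENNReal.ofReal_mul (by linarith)
    _ = ENNReal.ofReal (1 - δ₂) * μ F := by rw [hMdef, ENNReal.ofReal_toReal hFtop]
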